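/- Let f : ℝ² → ℝ² be a C¹ vector field with ∫_{|x|>r₀} |∇f|² dx < ∞ for some r₀ > 0. Writing f in polar coordinates f(r,θ), one has lim_{r→∞} (1/ln r) ∫₀^{2π} |f(r,θ)|² dθ = 0. -/

import Mathlib

open MeasureTheory Real Filter Set

private lemma cs_interval (a b : ℝ) (hab : a ≤ b) (u v : ℝ → ℝ)
    (hu : ContinuousOn u (Set.Icc a b)) (hv : ContinuousOn v (Set.Icc a b))
    (hu0 : ∀ x ∈ Set.Icc a b, 0 ≤ u x) (hv0 : ∀ x ∈ Set.Icc a b, 0 ≤ v x) :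
    ∫ x in a..b, u x * v x ≤
      Real.sqrt (∫ x in a..b, u x ^ 2) * Real.sqrt (∫ x in a..b, v x ^ 2) := by
  rw [intervalIntegral.integral_of_le hab, intervalIntegral.integral_of_le hab,
    intervalIntegral.integral_of_le hab]
  set μ := volume.restrict (Set.Ioc a b) with hμ
  haveI : IsFiniteMeasure μ := ⟨by
    rw [hμ, Measure.restrict_apply_univ]; exact measure_Ioc_lt_top⟩
  have hm : MeasurableSet (Set.Ioc a b) := measurableSet_Ioc
  have memu : MemLp u (ENNReal.ofReal 2) μ := by
    obtain ⟨C, hC⟩ := isCompact_Icc.exists_bound_of_continuousOn hu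
    exact MemLp.of_bound ((hu.mono Set.Ioc_subset_Icc_self).aestronglyMeasurable hm) C
      (((ae_restrict_iff' hm).2 (ae_of_all _ fun x hx => hC x (Set.Ioc_subset_Icc_self hx))))
  have memv : MemLp v (ENNReal.ofReal 2) μ := by
    obtain ⟨C, hC⟩ := isCompact_Icc.exists_bound_of_continuousOn hv
    exact MemLp.of_bound ((hv.mono Set.Ioc_subset_Icc_self).aestronglyMeasurable hm) C
      (((ae_restrict_iff' hm).2 (ae_of_all _ fun x hx => hC x (Set.Ioc_subset_Icc_self hx))))
  have hcj : Real.HolderConjugate 2 2 := Real.holderConjugate_iff.mpr ⟨one_lt_two, by norm_num⟩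
  have h := integral_mul_le_Lp_mul_Lq_of_nonneg (μ := μ) hcj
    ((ae_restrict_iff' hm).2 (ae_of_all _ fun x hx => hu0 x (Set.Ioc_subset_Icc_self hx)))
    ((ae_restrict_iff' hm).2 (ae_of_all _ fun x hx => hv0 x (Set.Ioc_subset_Icc_self hx)))
    memu memv
  have h2 : ∀ w : ℝ → ℝ, (∫ x, w x ^ (2:ℝ) ∂μ) = ∫ x, w x ^ 2 ∂μ := by
    intro w
    refine integral_congr_ae (ae_of_all _ fun x => ?_)
    rw [show ((2:ℝ):ℝ) = ((2:ℕ):ℝ) by norm_num]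
    exact Real.rpow_natCast _ 2
  rw [h2, h2] at h
  calc ∫ x, u x * v x ∂μ ≤ _ := h
  _ = Real.sqrt (∫ x, u x ^ 2 ∂μ) * Real.sqrt (∫ x, v x ^ 2 ∂μ) := by
      rw [Real.sqrt_eq_rpow, Real.sqrt_eq_rpow]


private lemma key_pointwise (f : ℝ × ℝ → ℝ × ℝ) (hf : ContDiff ℝ 1 f)
    (ρ r θ : ℝ) (hρ : 0 < ρ) (hρr : ρ ≤ r) :
    ‖f (r * Real.cos θ, r * Real.sin θ)‖ ^ 2 ≤
      2 * ‖f (ρ * Real.cos θ, ρ * Real.sin θ)‖ ^ 2 +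
        2 * Real.log (r / ρ) *
          ∫ s in ρ..r, s * ‖fderiv ℝ f (s * Real.cos θ, s * Real.sin θ)‖ ^ 2 := by
  set P : ℝ → ℝ × ℝ := fun s => (s * Real.cos θ, s * Real.sin θ) with hP
  have hPc : Continuous P := by
    apply Continuous.prodMk <;> exact (continuous_id.mul continuous_const)
  have hKc : Continuous (fun x : ℝ × ℝ => ‖fderiv ℝ f x‖) :=
    (hf.continuous_fderiv one_ne_zero).norm
  set γ' : ℝ → ℝ × ℝ := fun s => fderiv ℝ f (P s) (Real.cos θ, Real.sin θ) with hγ'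
  have hγ : ∀ s : ℝ, HasDerivAt (fun s => f (P s)) (γ' s) s := by
    intro s
    have h1 : HasDerivAt P (Real.cos θ, Real.sin θ) s :=
      HasDerivAt.prodMk (hasDerivAt_mul_const _) (hasDerivAt_mul_const _)
    exact ((hf.differentiable one_ne_zero).differentiableAt.hasFDerivAt).comp_hasDerivAt s h1
  have hγ'c : Continuous γ' :=
    ((hf.continuous_fderiv one_ne_zero).comp hPc).clm_apply continuous_const
  have hftc : ∫ s in ρ..r, γ' s = f (P r) - f (P ρ) :=
    intervalIntegral.integral_eq_sub_of_hasDerivAt (fun s _ => hγ s)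
      (hγ'c.intervalIntegrable ρ r)
  have hb : ∀ s : ℝ, ‖γ' s‖ ≤ ‖fderiv ℝ f (P s)‖ := by
    intro s
    refine le_trans ((fderiv ℝ f (P s)).le_opNorm _) ?_
    have h1 : ‖((Real.cos θ : ℝ), (Real.sin θ : ℝ))‖ ≤ 1 := by
      rw [Prod.norm_def]
      exact max_le (by rw [Real.norm_eq_abs]; exact abs_cos_le_one θ)
        (by rw [Real.norm_eq_abs]; exact abs_sin_le_one θ)
    nlinarith [norm_nonneg (fderiv ℝ f (P s))]
  have hnorm : ‖f (P r)‖ ≤ ‖f (P ρ)‖ + ∫ s in ρ..r, ‖fderiv ℝ f (P s)‖ := by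
    have h2 : ‖f (P r)‖ ≤ ‖f (P ρ)‖ + ‖f (P r) - f (P ρ)‖ := by
      have := norm_add_le (f (P ρ)) (f (P r) - f (P ρ)); simpa using this
    refine h2.trans ((add_le_add_iff_left _).2 ?_)
    rw [← hftc]
    refine (intervalIntegral.norm_integral_le_integral_norm hρr).trans ?_
    exact intervalIntegral.integral_mono_on hρr (hγ'c.norm.intervalIntegrable ρ r)
      ((hKc.comp hPc).intervalIntegrable ρ r) (fun s _ => hb s)
  -- Cauchy-Schwarz step
  set W : ℝ := ∫ s in ρ..r, s * ‖fderiv ℝ f (P s)‖ ^ 2 with hW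
  set L : ℝ := Real.log (r / ρ) with hL
  have hWpos : 0 ≤ W := by
    apply intervalIntegral.integral_nonneg hρr
    intro s hs
    have : 0 ≤ s := le_trans hρ.le hs.1
    positivity
  have hLpos : 0 ≤ L := Real.log_nonneg ((one_le_div hρ).2 hρr)
  have hcs : (∫ s in ρ..r, ‖fderiv ℝ f (P s)‖) ≤ Real.sqrt W * Real.sqrt L := by
    have h1 : (∫ s in ρ..r, ‖fderiv ℝ f (P s)‖)
        = ∫ s in ρ..r, (Real.sqrt s * ‖fderiv ℝ f (P s)‖) * (Real.sqrt s)⁻¹ := by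
      refine intervalIntegral.integral_congr fun s hs => ?_
      rw [Set.uIcc_of_le hρr] at hs
      have hs0 : 0 < s := lt_of_lt_of_le hρ hs.1
      field_simp [Real.sqrt_ne_zero'.2 hs0]
    have h2 : (∫ s in ρ..r, (Real.sqrt s * ‖fderiv ℝ f (P s)‖) ^ 2) = W := by
      refine intervalIntegral.integral_congr fun s hs => ?_
      rw [Set.uIcc_of_le hρr] at hs
      have hs0 : (0:ℝ) ≤ s := le_trans hρ.le hs.1
      rw [mul_pow, Real.sq_sqrt hs0]
    have h3 : (∫ s in ρ..r, ((Real.sqrt s)⁻¹) ^ 2) = L := by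
      have h4 : (∫ s in ρ..r, ((Real.sqrt s)⁻¹) ^ 2) = ∫ s in ρ..r, 1 / s := by
        refine intervalIntegral.integral_congr fun s hs => ?_
        rw [Set.uIcc_of_le hρr] at hs
        have hs0 : (0:ℝ) ≤ s := le_trans hρ.le hs.1
        rw [inv_pow, Real.sq_sqrt hs0, one_div]
      rw [h4, integral_one_div]
      intro h0
      rw [Set.uIcc_of_le hρr] at h0
      exact absurd h0.1 (not_le.2 hρ)
    rw [h1, ← h2, ← h3]
    refine cs_interval ρ r hρr _ _ ?_ ?_ ?_ ?_
    · exact (Real.continuous_sqrt.continuousOn).mul ((hKc.comp hPc).continuousOn)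
    · refine (Real.continuous_sqrt.continuousOn).inv₀ fun x hx => ?_
      exact Real.sqrt_ne_zero'.2 (lt_of_lt_of_le hρ hx.1)
    · intro x hx
      have : (0:ℝ) ≤ x := le_trans hρ.le hx.1
      positivity
    · intro x hx; positivity
  have hkey : ‖f (P r)‖ ≤ ‖f (P ρ)‖ + Real.sqrt W * Real.sqrt L :=
    hnorm.trans ((add_le_add_iff_left _).2 hcs)
  have hWL : (Real.sqrt W * Real.sqrt L) ^ 2 = W * L := by
    rw [mul_pow, Real.sq_sqrt hWpos, Real.sq_sqrt hLpos]
  have hx0 : (0:ℝ) ≤ ‖f (P r)‖ := norm_nonneg _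
  have hmul : ‖f (P r)‖ * ‖f (P r)‖ ≤
      (‖f (P ρ)‖ + Real.sqrt W * Real.sqrt L) * (‖f (P ρ)‖ + Real.sqrt W * Real.sqrt L) :=
    mul_self_le_mul_self hx0 hkey
  nlinarith [sq_nonneg (‖f (P ρ)‖ - Real.sqrt W * Real.sqrt L), hmul, hWL]

private lemma ring_bound (f : ℝ × ℝ → ℝ × ℝ) (hf : ContDiff ℝ 1 f) (r0 : ℝ)
    (hD : IntegrableOn (fun x => ‖fderiv ℝ f x‖ ^ 2) {x : ℝ × ℝ | r0 < ‖x‖})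
    (ρ r : ℝ) (h2r0 : 2 * r0 ≤ ρ) (hρ : 0 < ρ) (hρr : ρ ≤ r) :
    (∫ θ in (0:ℝ)..(2*π), ∫ s in ρ..r, s * ‖fderiv ℝ f (s * Real.cos θ, s * Real.sin θ)‖ ^ 2)
      ≤ ∫ x in {x : ℝ × ℝ | ρ/2 < ‖x‖}, ‖fderiv ℝ f x‖ ^ 2 := by
  set K : ℝ × ℝ → ℝ := fun x => ‖fderiv ℝ f x‖ ^ 2 with hK
  have hKc : Continuous K := ((hf.continuous_fderiv one_ne_zero).norm).pow 2
  set W : ℝ → ℝ := fun θ => ∫ s in ρ..r, s * K (s * Real.cos θ, s * Real.sin θ) with hWdef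
  -- Step 1: periodicity
  have hper : Function.Periodic W (2 * π) := by
    intro θ
    simp only [hWdef, Real.cos_add_two_pi, Real.sin_add_two_pi]
  have hshift : (∫ θ in (0:ℝ)..(2*π), W θ) = ∫ θ in (-π)..π, W θ := by
    have h := hper.intervalIntegral_add_eq 0 (-π)
    rw [zero_add] at h
    rw [h]
    congr 1
    ring
  -- Step 2: rewrite as integrals over Ioo
  have hIoo : ∀ (a b : ℝ) (g : ℝ → ℝ), a ≤ b → (∫ x in a..b, g x) = ∫ x in Set.Ioo a b, g x := by
    intro a b g hab
    rw [intervalIntegral.integral_of_le hab, integral_Ioc_eq_integral_Ioo]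
  set g : ℝ × ℝ → ℝ := fun p => p.1 * K (p.1 * Real.cos p.2, p.1 * Real.sin p.2) with hgdef
  have hps : ∀ p : ℝ × ℝ, (polarCoord.symm p : ℝ × ℝ) = (p.1 * Real.cos p.2, p.1 * Real.sin p.2) :=
    fun p => rfl
  have hgc : Continuous g := by
    apply continuous_fst.mul
    exact hKc.comp ((continuous_fst.mul (Real.continuous_cos.comp continuous_snd)).prodMk
      (continuous_fst.mul (Real.continuous_sin.comp continuous_snd)))
  have hgsymm : ∀ p : ℝ × ℝ, g p = p.1 * K (polarCoord.symm p) := by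
    intro p; rw [hps]
  -- integrability of g on bounded sets
  have hgint : ∀ (s t : Set (ℝ × ℝ)) (u : ℝ × ℝ → ℝ), Continuous u → IsCompact t → s ⊆ t →
      IntegrableOn u s (volume.prod volume) := by
    intro s t u hu ht hst
    rw [← Measure.volume_eq_prod]
    exact ((hu.continuousOn).integrableOn_compact ht).mono_set hst
  -- Step 3: swap
  have hswap : (∫ θ in Set.Ioo (-π) π, ∫ s in Set.Ioo ρ r, g (s, θ))
      = ∫ s in Set.Ioo ρ r, ∫ θ in Set.Ioo (-π) π, g (s, θ) := by
    apply MeasureTheory.integral_integral_swap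
    rw [Measure.prod_restrict]
    have : IntegrableOn (fun z : ℝ × ℝ => g (z.2, z.1)) (Set.Ioo (-π) π ×ˢ Set.Ioo ρ r)
        (volume.prod volume) :=
      hgint _ (Set.Icc (-π) π ×ˢ Set.Icc ρ r) _
        (hgc.comp (continuous_snd.prodMk continuous_fst))
        (isCompact_Icc.prod isCompact_Icc)
        (Set.prod_mono Set.Ioo_subset_Icc_self Set.Ioo_subset_Icc_self)
    rw [← Measure.volume_eq_prod] at this
    exact this
  -- Step 4: iterated to product set
  have hprod : (∫ z in Set.Ioo ρ r ×ˢ Set.Ioo (-π) π, g z ∂(volume.prod volume))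
      = ∫ s in Set.Ioo ρ r, ∫ θ in Set.Ioo (-π) π, g (s, θ) :=
    MeasureTheory.setIntegral_prod g
      (hgint _ (Set.Icc ρ r ×ˢ Set.Icc (-π) π) g hgc (isCompact_Icc.prod isCompact_Icc)
        (Set.prod_mono Set.Ioo_subset_Icc_self Set.Ioo_subset_Icc_self))
  -- Step 5: polar coordinates
  set A : Set (ℝ × ℝ) := {x | ρ^2 < x.1^2 + x.2^2 ∧ x.1^2 + x.2^2 < r^2} with hAdef
  have hcont2 : Continuous fun x : ℝ × ℝ => x.1^2 + x.2^2 := by fun_prop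
  have hAopen : IsOpen A := by
    rw [hAdef, Set.setOf_and]
    exact (isOpen_lt continuous_const hcont2).inter (isOpen_lt hcont2 continuous_const)
  have hA : MeasurableSet A := hAopen.measurableSet
  set S : Set (ℝ × ℝ) := Set.Ioo ρ r ×ˢ Set.Ioo (-π) π with hSdef
  have hS : MeasurableSet S := measurableSet_Ioo.prod measurableSet_Ioo
  have hpolar := integral_comp_polarCoord_symm (A.indicator K)
  have hcongr : ∀ p ∈ polarCoord.target, p.1 • (A.indicator K (polarCoord.symm p))
      = S.indicator g p := by
    intro p hp
    rw [show polarCoord.target = Set.Ioi (0:ℝ) ×ˢ Set.Ioo (-π) π from rfl] at hp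
    have hp1 : 0 < p.1 := hp.1
    have hsum : (p.1 * Real.cos p.2)^2 + (p.1 * Real.sin p.2)^2 = p.1^2 := by
      linear_combination (p.1^2) * (Real.sin_sq_add_cos_sq p.2)
    have hmem : (polarCoord.symm p : ℝ × ℝ) ∈ A ↔ p ∈ S := by
      rw [hps, hAdef, hSdef]
      simp only [Set.mem_setOf_eq, Set.mem_prod, Set.mem_Ioo]
      rw [hsum]
      constructor
      · rintro ⟨h1, h2⟩
        refine ⟨⟨by nlinarith, by nlinarith⟩, hp.2⟩
      · rintro ⟨⟨h1, h2⟩, -⟩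
        exact ⟨by nlinarith, by nlinarith⟩
    by_cases h : (polarCoord.symm p : ℝ × ℝ) ∈ A
    · rw [Set.indicator_of_mem h, Set.indicator_of_mem (hmem.1 h), hgsymm p, smul_eq_mul]
    · rw [Set.indicator_of_notMem h, Set.indicator_of_notMem (fun hc => h (hmem.2 hc)),
        smul_zero]
  have hpolar2 : (∫ z in S, g z ∂(volume.prod volume)) = ∫ x in A, K x := by
    rw [← integral_indicator hA, ← hpolar]
    rw [setIntegral_congr_fun polarCoord.open_target.measurableSet hcongr]
    rw [← Measure.volume_eq_prod]
    rw [setIntegral_indicator hS]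
    congr 1
    rw [Set.inter_eq_self_of_subset_right]
    rw [show polarCoord.target = Set.Ioi (0:ℝ) ×ˢ Set.Ioo (-π) π from rfl, hSdef]
    exact Set.prod_mono (fun x hx => lt_trans hρ hx.1) (fun x hx => hx)
  -- Step 6: A inside the exterior region
  have hsub1 : A ⊆ {x : ℝ × ℝ | ρ/2 < ‖x‖} := by
    intro x hx
    have h1 : |x.1| ≤ ‖x‖ := by rw [← Real.norm_eq_abs]; exact norm_fst_le x
    have h2 : |x.2| ≤ ‖x‖ := by rw [← Real.norm_eq_abs]; exact norm_snd_le x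
    have hx1 := hx.1
    simp only [Set.mem_setOf_eq]
    nlinarith [sq_abs x.1, sq_abs x.2, abs_nonneg x.1, abs_nonneg x.2, norm_nonneg x]
  have hsub2 : {x : ℝ × ℝ | ρ/2 < ‖x‖} ⊆ {x : ℝ × ℝ | r0 < ‖x‖} := by
    intro x hx
    simp only [Set.mem_setOf_eq] at *
    linarith
  have hfin : (∫ x in A, K x) ≤ ∫ x in {x : ℝ × ℝ | ρ/2 < ‖x‖}, K x := by
    refine setIntegral_mono_set (hD.mono_set hsub2) ?_ (HasSubset.Subset.eventuallyLE hsub1)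
    exact Filter.Eventually.of_forall fun x => by positivity
  -- Assemble
  calc (∫ θ in (0:ℝ)..(2*π), ∫ s in ρ..r, s * K (s * Real.cos θ, s * Real.sin θ))
      = ∫ θ in (-π)..π, W θ := hshift
    _ = ∫ θ in Set.Ioo (-π) π, W θ := hIoo _ _ _ (by linarith [Real.pi_pos])
    _ = ∫ θ in Set.Ioo (-π) π, ∫ s in Set.Ioo ρ r, g (s, θ) := by
        refine setIntegral_congr_fun measurableSet_Ioo fun θ _ => ?_
        show W θ = _
        rw [hWdef]
        simp only
        rw [hIoo ρ r _ hρr]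
    _ = ∫ s in Set.Ioo ρ r, ∫ θ in Set.Ioo (-π) π, g (s, θ) := hswap
    _ = ∫ z in S, g z ∂(volume.prod volume) := hprod.symm
    _ = ∫ x in A, K x := hpolar2
    _ ≤ _ := hfin


/-- Gilbarg–Weinberger decay: finite Dirichlet integral on an exterior planar domain forces
the angular `L²` average of `f` on circles of radius `r` to be `o(ln r)`. -/
theorem gilbarg_weinberger_average_decay (f : ℝ × ℝ → ℝ × ℝ) (hf : ContDiff ℝ 1 f)
    (r0 : ℝ) (hr0 : 0 < r0)
    (hD : IntegrableOn (fun x => ‖fderiv ℝ f x‖ ^ 2) {x : ℝ × ℝ | r0 < ‖x‖}) :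
    Tendsto (fun r : ℝ =>
        (Real.log r)⁻¹ * ∫ θ in (0:ℝ)..(2 * π), ‖f (r * Real.cos θ, r * Real.sin θ)‖ ^ 2)
      atTop (nhds 0) := by
  have hKc : Continuous (fun x : ℝ × ℝ => ‖fderiv ℝ f x‖ ^ 2) :=
    ((hf.continuous_fderiv one_ne_zero).norm).pow 2
  set Dp : ℝ → ℝ := fun t => ∫ x in {x : ℝ × ℝ | t < ‖x‖}, ‖fderiv ℝ f x‖ ^ 2 with hDpdef
  set G : ℝ → ℝ := fun r => ∫ θ in (0:ℝ)..(2 * π), ‖f (r * Real.cos θ, r * Real.sin θ)‖ ^ 2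
    with hGdef
  have hmeas : ∀ t : ℝ, MeasurableSet {x : ℝ × ℝ | t < ‖x‖} := fun t =>
    (isOpen_lt continuous_const continuous_norm).measurableSet
  have hDpnn : ∀ t, 0 ≤ Dp t := fun t =>
    setIntegral_nonneg (hmeas t) fun x _ => by positivity
  have hcθ : ∀ ρ' : ℝ, Continuous (fun θ => ‖f (ρ' * Real.cos θ, ρ' * Real.sin θ)‖ ^ 2) :=
    fun ρ' => ((hf.continuous.comp ((continuous_const.mul Real.continuous_cos).prodMk
      (continuous_const.mul Real.continuous_sin))).norm.pow 2)
  have hGnn : ∀ r, 0 ≤ G r := fun r =>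
    intervalIntegral.integral_nonneg (by positivity) fun θ _ => by positivity
  -- Key quantitative estimate
  have hkey : ∀ ρ r : ℝ, 0 < ρ → 2 * r0 ≤ ρ → ρ ≤ r →
      G r ≤ 2 * G ρ + 2 * Real.log (r / ρ) * Dp (ρ / 2) := by
    intro ρ r hρ h2r0 hρr
    have hL0 : 0 ≤ Real.log (r / ρ) := Real.log_nonneg ((one_le_div hρ).2 hρr)
    set W : ℝ → ℝ := fun θ =>
      ∫ s in ρ..r, s * ‖fderiv ℝ f (s * Real.cos θ, s * Real.sin θ)‖ ^ 2 with hWdef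
    have hWc : Continuous W := by
      apply intervalIntegral.continuous_parametric_intervalIntegral_of_continuous'
      show Continuous fun q : ℝ × ℝ => q.2 * ‖fderiv ℝ f (q.2 * Real.cos q.1,
        q.2 * Real.sin q.1)‖ ^ 2
      exact continuous_snd.mul (hKc.comp
        ((continuous_snd.mul (Real.continuous_cos.comp continuous_fst)).prodMk
          (continuous_snd.mul (Real.continuous_sin.comp continuous_fst))))
    have h1 : G r ≤ ∫ θ in (0:ℝ)..(2 * π),
        (2 * ‖f (ρ * Real.cos θ, ρ * Real.sin θ)‖ ^ 2 + 2 * Real.log (r / ρ) * W θ) := by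
      refine intervalIntegral.integral_mono_on (by positivity) ((hcθ r).intervalIntegrable _ _)
        (((continuous_const.mul (hcθ ρ)).add (continuous_const.mul hWc)).intervalIntegrable _ _)
        (fun θ _ => key_pointwise f hf ρ r θ hρ hρr)
    have h2 : (∫ θ in (0:ℝ)..(2 * π),
        (2 * ‖f (ρ * Real.cos θ, ρ * Real.sin θ)‖ ^ 2 + 2 * Real.log (r / ρ) * W θ))
        = 2 * G ρ + 2 * Real.log (r / ρ) * ∫ θ in (0:ℝ)..(2 * π), W θ := by
      rw [intervalIntegral.integral_add (f := fun θ => 2 * ‖f (ρ * Real.cos θ, ρ * Real.sin θ)‖ ^ 2)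
        (g := fun θ => 2 * Real.log (r / ρ) * W θ) ((continuous_const.mul (hcθ ρ)).intervalIntegrable _ _)
        ((continuous_const.mul hWc).intervalIntegrable _ _),
        intervalIntegral.integral_const_mul, intervalIntegral.integral_const_mul]
    have h3 : (∫ θ in (0:ℝ)..(2 * π), W θ) ≤ Dp (ρ / 2) :=
      ring_bound f hf r0 hD ρ r h2r0 hρ hρr
    calc G r ≤ _ := h1
      _ = _ := h2
      _ ≤ 2 * G ρ + 2 * Real.log (r / ρ) * Dp (ρ / 2) := by
          refine (add_le_add_iff_left _).2 (mul_le_mul_of_nonneg_left h3 (by positivity))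
  -- Tail of the Dirichlet integral tends to zero
  have hDt : Tendsto Dp atTop (nhds 0) := by
    have h := tendsto_setIntegral_of_antitone (μ := (volume : Measure (ℝ × ℝ)))
      (f := fun x => ‖fderiv ℝ f x‖ ^ 2) hmeas
      (fun a b hab x hx => lt_of_le_of_lt hab hx) ⟨r0, hD⟩
    have hempty : ⋂ t : ℝ, {x : ℝ × ℝ | t < ‖x‖} = ∅ := by
      ext x
      simp only [Set.mem_iInter, Set.mem_setOf_eq, Set.mem_empty_iff_false, iff_false,
        not_forall, not_lt]
      exact ⟨‖x‖, le_rfl⟩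
    rw [hempty] at h
    simpa using h
  -- Final ε-argument
  rw [Metric.tendsto_atTop]
  intro ε hε
  obtain ⟨t0, ht0⟩ := (Metric.tendsto_atTop.1 hDt) (ε / 8) (by positivity)
  set ρ := max (max (2 * r0) 1) (2 * t0) with hρdef
  have hρ1 : (1:ℝ) ≤ ρ := le_trans (le_max_right _ 1) (le_max_left _ _)
  have hρpos : (0:ℝ) < ρ := lt_of_lt_of_le one_pos hρ1
  have hρr0 : 2 * r0 ≤ ρ := le_trans (le_max_left _ 1) (le_max_left _ _)
  have hρt0 : t0 ≤ ρ / 2 := by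
    have := le_max_right (max (2 * r0) 1) (2 * t0); linarith
  have hDp : Dp (ρ / 2) < ε / 8 := by
    have := ht0 (ρ / 2) hρt0
    rw [Real.dist_eq, sub_zero] at this
    exact lt_of_le_of_lt (le_abs_self _) this
  have h2 : Tendsto (fun r : ℝ => (Real.log r)⁻¹ * (2 * G ρ)) atTop (nhds 0) := by
    have := (tendsto_inv_atTop_zero.comp Real.tendsto_log_atTop).mul_const (2 * G ρ)
    simpa using this
  obtain ⟨N1, hN1⟩ := (Metric.tendsto_atTop.1 h2) (ε / 2) (by positivity)
  refine ⟨max (max ρ 2) N1, fun r hr => ?_⟩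
  have hrρ : ρ ≤ r := le_trans (le_trans (le_max_left _ 2) (le_max_left _ N1)) hr
  have hr2 : (2:ℝ) ≤ r := le_trans (le_trans (le_max_right _ 2) (le_max_left _ N1)) hr
  have hrN1 : N1 ≤ r := le_trans (le_max_right _ _) hr
  have hlogpos : 0 < Real.log r := Real.log_pos (by linarith)
  rw [Real.dist_eq, sub_zero, abs_of_nonneg (mul_nonneg (inv_nonneg.2 hlogpos.le) (hGnn r))]
  have hb1 : (Real.log r)⁻¹ * (2 * G ρ) < ε / 2 := by
    have := hN1 r hrN1
    rw [Real.dist_eq, sub_zero] at this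
    exact lt_of_le_of_lt (le_abs_self _) this
  have hL0 : 0 ≤ Real.log (r / ρ) := Real.log_nonneg ((one_le_div hρpos).2 hrρ)
  have hL1 : Real.log (r / ρ) ≤ Real.log r :=
    Real.log_le_log (by positivity) (div_le_self (by linarith) hρ1)
  have hb2 : (Real.log r)⁻¹ * (2 * Real.log (r / ρ) * Dp (ρ / 2)) ≤ ε / 2 := by
    have h3 : 2 * Real.log (r / ρ) * Dp (ρ / 2) ≤ 2 * Real.log r * (ε / 8) := by
      have := hDpnn (ρ / 2)
      nlinarith
    calc (Real.log r)⁻¹ * (2 * Real.log (r / ρ) * Dp (ρ / 2))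
        ≤ (Real.log r)⁻¹ * (2 * Real.log r * (ε / 8)) :=
          mul_le_mul_of_nonneg_left h3 (by positivity)
      _ = ε / 4 := by field_simp; ring
      _ ≤ ε / 2 := by linarith
  calc (Real.log r)⁻¹ * G r
      ≤ (Real.log r)⁻¹ * (2 * G ρ + 2 * Real.log (r / ρ) * Dp (ρ / 2)) :=
        mul_le_mul_of_nonneg_left (hkey ρ r hρpos hρr0 hrρ) (by positivity)
    _ = (Real.log r)⁻¹ * (2 * G ρ) + (Real.log r)⁻¹ * (2 * Real.log (r / ρ) * Dp (ρ / 2)) := by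
        ring
    _ < ε / 2 + ε / 2 := add_lt_add_of_lt_of_le hb1 hb2
    _ = ε := by ring
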